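/- Let U ∈ ℝ^{n×2} and Û ∈ ℝ^{n×2} each have orthonormal columns, and let δ = ‖(I − Û Ûᵀ) U‖₂. Then |det(Uᵀ Û)| ≥ 1 − δ². -/

import Mathlib

open Matrix MeasureTheory ProbabilityTheory Real

noncomputable section

/-- Euclidean (ℓ₂) norm of a vector in ℝ^n. -/
def norm2 {n : ℕ} (x : Fin n → ℝ) : ℝ := Real.sqrt (∑ i, x i ^ 2)

/-- Entrywise maximum absolute value (ℓ_∞ norm) of a vector in ℝ^n. -/
def normInf {n : ℕ} (x : Fin n → ℝ) : ℝ := ⨆ i, |x i|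

/-- Euclidean inner product on ℝ^n. -/
def inner2 {n : ℕ} (x y : Fin n → ℝ) : ℝ := ∑ i, x i * y i

/-- Spectral norm (ℓ₂ operator norm) of a real matrix. -/
def specNorm {m n : ℕ} (A : Matrix (Fin m) (Fin n) ℝ) : ℝ :=
  ⨆ x : {x : Fin n → ℝ // norm2 x ≤ 1}, norm2 (A.mulVec x.1)

/-- Max-norm: maximum absolute value of the entries of a matrix. -/
def maxNorm {m n : ℕ} (A : Matrix (Fin m) (Fin n) ℝ) : ℝ :=
  ⨆ q : Fin m × Fin n, |A q.1 q.2|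

/-- The n×2 matrix with columns u and v. -/
def twoCols {n : ℕ} (u v : Fin n → ℝ) : Matrix (Fin n) (Fin 2) ℝ :=
  Matrix.of fun i j => ![u i, v i] j

/-- The all-ones vector in ℝ^n. -/
def onesVec (n : ℕ) : Fin n → ℝ := fun _ => 1

/-- `σ1 ≥ σ2 ≥ 0` are the two largest singular values of `H`, with corresponding
orthonormal left singular vectors `u1, u2` (eigenvectors of `H Hᵀ`). -/
def IsTopTwoSingular {n : ℕ} (H : Matrix (Fin n) (Fin n) ℝ)
    (σ1 σ2 : ℝ) (u1 u2 : Fin n → ℝ) : Prop :=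
  0 ≤ σ2 ∧ σ2 ≤ σ1 ∧
  inner2 u1 u1 = 1 ∧ inner2 u2 u2 = 1 ∧ inner2 u1 u2 = 0 ∧
  (H * Hᵀ).mulVec u1 = σ1 ^ 2 • u1 ∧
  (H * Hᵀ).mulVec u2 = σ2 ^ 2 • u2 ∧
  ∀ v : Fin n → ℝ, inner2 v u1 = 0 → inner2 v u2 = 0 →
    inner2 ((H * Hᵀ).mulVec v) v ≤ σ2 ^ 2 * inner2 v v

/-- The uniform probability measure on the interval [−M, M]. -/
def unifIcc (M : ℝ) : Measure ℝ :=
  (ENNReal.ofReal (2 * M))⁻¹ • volume.restrict (Set.Icc (-M) M)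

/-- The ERO mixture law of a single pairwise measurement `R_{ij}` (with `a = r_i`, `b = r_j`):
`a − b` w.p. `ηp`, uniform on `[−M, M]` w.p. `(1−η)p`, and `0` w.p. `1−p`. -/
def EROmix (M p η a b : ℝ) : Measure ℝ :=
  ENNReal.ofReal (η * p) • Measure.dirac (a - b) +
    ENNReal.ofReal ((1 - η) * p) • unifIcc M +
    ENNReal.ofReal (1 - p) • Measure.dirac (0 : ℝ)

/-- The Erdős–Rényi Outliers (ERO) model: `H` is skew-symmetric with zero diagonal, the
above-diagonal entries are jointly independent, and each `H_{ij}` (i < j) has the ERO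
mixture law. -/
structure IsEROModel {Ω : Type} [MeasurableSpace Ω] (P : Measure Ω)
    {n : ℕ} (M p η : ℝ) (r : Fin n → ℝ)
    (H : Ω → Matrix (Fin n) (Fin n) ℝ) : Prop where
  diag : ∀ ω i, H ω i i = 0
  skew : ∀ ω i j, H ω j i = - H ω i j
  meas : ∀ i j, Measurable fun ω => H ω i j
  indep : iIndepFun (m := fun _ => Real.measurableSpace)
    (fun (q : {q : Fin n × Fin n // q.1 < q.2}) ω => H ω q.1.1 q.1.2) P
  law : ∀ i j : Fin n, i < j →
    Measure.map (fun ω => H ω i j) P = EROmix M p η (r i) (r j)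


lemma sum_sq_le_one_of_norm2 {n : ℕ} (x : Fin n → ℝ) (h : norm2 x ≤ 1) :
    ∑ i, x i ^ 2 ≤ 1 := by
  have h0 : 0 ≤ ∑ i, x i ^ 2 := Finset.sum_nonneg fun i _ => sq_nonneg _
  rw [norm2] at h
  nlinarith [Real.sq_sqrt h0, Real.sqrt_nonneg (∑ i, x i ^ 2)]

lemma sum_sq_le_of_norm2 {n : ℕ} (x : Fin n → ℝ) (c : ℝ) (h : norm2 x ≤ c) :
    ∑ i, x i ^ 2 ≤ c ^ 2 := by
  have h0 : 0 ≤ ∑ i, x i ^ 2 := Finset.sum_nonneg fun i _ => sq_nonneg _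
  rw [norm2] at h
  nlinarith [Real.sq_sqrt h0, Real.sqrt_nonneg (∑ i, x i ^ 2)]

lemma norm2_mulVec_bound {m n : ℕ} (A : Matrix (Fin m) (Fin n) ℝ)
    (x : Fin n → ℝ) (hx : norm2 x ≤ 1) :
    norm2 (A.mulVec x) ≤ Real.sqrt (∑ i, ∑ j, A i j ^ 2) := by
  apply Real.sqrt_le_sqrt
  have hxs := sum_sq_le_one_of_norm2 x hx
  calc ∑ i, (A.mulVec x) i ^ 2
      ≤ ∑ i, (∑ j, A i j ^ 2) * (∑ j, x j ^ 2) := by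
        apply Finset.sum_le_sum
        intro i _
        have := Finset.sum_mul_sq_le_sq_mul_sq Finset.univ (fun j => A i j) x
        simpa [Matrix.mulVec, dotProduct] using this
    _ ≤ ∑ i, ∑ j, A i j ^ 2 := by
        apply Finset.sum_le_sum
        intro i _
        have h1 : 0 ≤ ∑ j, A i j ^ 2 := Finset.sum_nonneg fun j _ => sq_nonneg _
        nlinarith

lemma specNorm_ge {m n : ℕ} (A : Matrix (Fin m) (Fin n) ℝ)
    (x : Fin n → ℝ) (hx : norm2 x ≤ 1) :
    norm2 (A.mulVec x) ≤ specNorm A := by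
  apply le_ciSup (f := fun x : {x : Fin n → ℝ // norm2 x ≤ 1} => norm2 (A.mulVec x.1))
    ?_ (⟨x, hx⟩ : {x : Fin n → ℝ // norm2 x ≤ 1})
  refine ⟨Real.sqrt (∑ i, ∑ j, A i j ^ 2), ?_⟩
  rintro y ⟨⟨z, hz⟩, rfl⟩
  exact norm2_mulVec_bound A z hz

lemma specNorm_nonneg {m n : ℕ} (A : Matrix (Fin m) (Fin n) ℝ) : 0 ≤ specNorm A := by
  have h := specNorm_ge A 0 (by simp [norm2])
  exact le_trans (Real.sqrt_nonneg _) h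

set_option maxHeartbeats 1000000 in
/-- Claim: determinant lower bound via the sin-Θ distance. -/
theorem stmt_19 {n : ℕ} (U Uh : Matrix (Fin n) (Fin 2) ℝ)
    (hU : Uᵀ * U = 1) (hUh : Uhᵀ * Uh = 1)
    (δ : ℝ) (hδ : δ = specNorm ((1 - Uh * Uhᵀ) * U)) :
    1 - δ ^ 2 ≤ |(Uᵀ * Uh).det| := by
  set A := (1 - Uh * Uhᵀ) * U with hA
  set W := Uᵀ * Uh with hW
  have hδ0 : 0 ≤ δ := hδ ▸ specNorm_nonneg A
  rcases le_or_gt (1 : ℝ) δ with hd1 | hd1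
  · have : 1 - δ ^ 2 ≤ 0 := by nlinarith
    exact this.trans (abs_nonneg _)
  have hz : Uhᵀ * A = 0 := by
    rw [hA, ← Matrix.mul_assoc, Matrix.mul_sub, Matrix.mul_one, ← Matrix.mul_assoc,
      hUh, Matrix.one_mul, sub_self, Matrix.zero_mul]
  have hstep : (1 - Uh * Uhᵀ) * A = A := by
    rw [Matrix.sub_mul, Matrix.one_mul, Matrix.mul_assoc, hz, Matrix.mul_zero, sub_zero]
  have hAtA : Aᵀ * A = 1 - W * Wᵀ := by
    have h1 : Aᵀ = Uᵀ * (1 - Uh * Uhᵀ) := by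
      rw [hA, Matrix.transpose_mul, Matrix.transpose_sub, Matrix.transpose_one,
        Matrix.transpose_mul, Matrix.transpose_transpose]
    have h2 : A = U - Uh * (Uhᵀ * U) := by
      rw [hA, Matrix.sub_mul, Matrix.one_mul, Matrix.mul_assoc]
    rw [h1, Matrix.mul_assoc, hstep, h2, Matrix.mul_sub, hU, hW, Matrix.transpose_mul,
      Matrix.transpose_transpose, ← Matrix.mul_assoc]
  obtain ⟨a, hBa⟩ : ∃ a, (W * Wᵀ) 0 0 = a := ⟨_, rfl⟩
  obtain ⟨b, hBb⟩ : ∃ b, (W * Wᵀ) 0 1 = b := ⟨_, rfl⟩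
  obtain ⟨c, hBc⟩ : ∃ c, (W * Wᵀ) 1 1 = c := ⟨_, rfl⟩
  have hBsym : (W * Wᵀ) 1 0 = b := by
    rw [← hBb]
    simp [Matrix.mul_apply, Matrix.transpose_apply, mul_comm]
  -- key pointwise bound on the unit disc
  have H2 : ∀ s t : ℝ, s ^ 2 + t ^ 2 ≤ 1 →
      s ^ 2 + t ^ 2 - δ ^ 2 ≤ a * s ^ 2 + 2 * b * s * t + c * t ^ 2 := by
    intro s t hst
    set x : Fin 2 → ℝ := ![s, t] with hx
    have hxn : norm2 x ≤ 1 := by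
      rw [norm2]
      refine Real.sqrt_le_one.mpr ?_
      simpa [hx, Fin.sum_univ_two] using hst
    have hb := specNorm_ge A x hxn
    rw [← hδ] at hb
    have hsum : ∑ i, (A.mulVec x) i ^ 2 ≤ δ ^ 2 := sum_sq_le_of_norm2 _ _ hb
    have e1 : ∑ i, (A.mulVec x) i ^ 2 = (A.mulVec x) ⬝ᵥ (A.mulVec x) := by
      simp [dotProduct, sq]
    have e2 : x ⬝ᵥ ((Aᵀ * A).mulVec x) = (A.mulVec x) ⬝ᵥ (A.mulVec x) := by
      rw [← Matrix.mulVec_mulVec, Matrix.dotProduct_mulVec, Matrix.vecMul_transpose]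
    have e3 : x ⬝ᵥ ((Aᵀ * A).mulVec x)
        = (s ^ 2 + t ^ 2) - (a * s ^ 2 + (b + b) * s * t + c * t ^ 2) := by
      rw [hAtA]
      simp only [Matrix.mulVec, dotProduct, Fin.sum_univ_two, Matrix.sub_apply,
        Matrix.one_apply, hBa, hBb, hBc, hBsym, hx, Matrix.cons_val_zero,
        Matrix.cons_val_one, Matrix.head_cons]
      norm_num
      ring
    have hfin : (s ^ 2 + t ^ 2) - (a * s ^ 2 + (b + b) * s * t + c * t ^ 2) ≤ δ ^ 2 := by
      rw [← e3, e2, ← e1]; exact hsum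
    linarith
  -- homogeneous version
  have G : ∀ s t : ℝ, (1 - δ ^ 2) * (s ^ 2 + t ^ 2) ≤
      a * s ^ 2 + 2 * b * s * t + c * t ^ 2 := by
    intro s t
    rcases eq_or_lt_of_le (by positivity : (0:ℝ) ≤ s ^ 2 + t ^ 2) with h0 | h0
    · have hs : s = 0 := by nlinarith [sq_nonneg s, sq_nonneg t]
      have ht : t = 0 := by nlinarith [sq_nonneg s, sq_nonneg t]
      simp [hs, ht]
    · set r := Real.sqrt (s ^ 2 + t ^ 2) with hr
      have hrpos : 0 < r := Real.sqrt_pos.mpr h0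
      have hrne : r ≠ 0 := ne_of_gt hrpos
      have hr2 : r ^ 2 = s ^ 2 + t ^ 2 := Real.sq_sqrt (le_of_lt h0)
      have hsum1 : (s / r) ^ 2 + (t / r) ^ 2 = 1 := by
        rw [div_pow, div_pow, ← add_div, hr2, div_self (ne_of_gt h0)]
      have hk := H2 (s / r) (t / r) (le_of_eq hsum1)
      rw [hsum1] at hk
      calc (1 - δ ^ 2) * (s ^ 2 + t ^ 2) = r ^ 2 * (1 - δ ^ 2) := by rw [hr2]; ring
        _ ≤ r ^ 2 * (a * (s/r) ^ 2 + 2 * b * (s/r) * (t/r) + c * (t/r) ^ 2) := by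
            apply mul_le_mul_of_nonneg_left hk (sq_nonneg r)
        _ = a * s ^ 2 + 2 * b * s * t + c * t ^ 2 := by field_simp
  have ht0 : 0 ≤ 1 - δ ^ 2 := by nlinarith
  have ha : 1 - δ ^ 2 ≤ a := by have := G 1 0; nlinarith
  have hc : 1 - δ ^ 2 ≤ c := by have := G 0 1; nlinarith
  set t0 : ℝ := 1 - δ ^ 2 with ht0d
  have hpsd : ∀ s t : ℝ, 0 ≤ (a - t0) * s ^ 2 + 2 * b * s * t + (c - t0) * t ^ 2 := by
    intro s t; have := G s t; nlinarith
  have hkey : b ^ 2 ≤ (a - t0) * (c - t0) := by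
    have hp : 0 ≤ a - t0 := by linarith
    have hr : 0 ≤ c - t0 := by linarith
    rcases eq_or_lt_of_le hp with hp0 | hp0
    · nlinarith [hpsd (c - t0 + 1) (-b), hr, sq_nonneg b]
    · nlinarith [hpsd (-b) (a - t0), hp0]
  have hdetB : t0 ^ 2 ≤ a * c - b ^ 2 := by nlinarith
  have hdetW : W.det ^ 2 = a * c - b ^ 2 := by
    have h1 : (W * Wᵀ).det = W.det * W.det := by
      rw [Matrix.det_mul, Matrix.det_transpose]
    have h2 : (W * Wᵀ).det = a * c - b * b := by
      rw [Matrix.det_fin_two, hBa, hBb, hBc, hBsym]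
    nlinarith [h1, h2]
  have hfin : t0 ^ 2 ≤ |W.det| ^ 2 := by rw [sq_abs, hdetW]; exact hdetB
  nlinarith [abs_nonneg W.det, hfin, ht0]


end
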